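/- Let G be a geometric random variable on {1,2,...} with success parameter p ∈ (0,1], i.e., Pr{G = k} = (1-p)^{k-1} p. Then for every real ρ > 0, the expectation E[binom(G+ρ-1, ρ)] = (1/p)^ρ, where binom(a,b) = Γ(a+1)/(Γ(b+1)Γ(a-b+1)) is the generalized binomial coefficient. -/

import Mathlib

open MeasureTheory Set Real

/-- Generalized binomial coefficient via the Gamma function:
`binom a b = Γ(a+1) / (Γ(b+1) Γ(a-b+1))`. -/
noncomputable def gammaBinom (a b : ℝ) : ℝ :=
  Real.Gamma (a + 1) / (Real.Gamma (b + 1) * Real.Gamma (a - b + 1))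

lemma exp_tsum (x : ℝ) : ∑' n : ℕ, x ^ n / n.factorial = Real.exp x := by
  rw [Real.exp_eq_exp_ℝ, NormedSpace.exp_eq_tsum_div]

lemma gamma_lintegral (s : ℝ) (hs : 0 < s) :
    ∫⁻ t in Ioi (0:ℝ), ENNReal.ofReal (Real.exp (-t) * t ^ (s - 1))
      = ENNReal.ofReal (Real.Gamma s) := by
  rw [Real.Gamma_eq_integral hs, ofReal_integral_eq_lintegral_ofReal
    (Real.GammaIntegral_convergent hs)]
  filter_upwards [ae_restrict_mem measurableSet_Ioi] with t ht
  exact mul_nonneg (Real.exp_pos _).le (Real.rpow_nonneg (le_of_lt ht) _)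

/-- For a geometric random variable `G` on `{1,2,...}` with parameter `p ∈ (0,1]`
(so `Pr{G = k+1} = (1-p)^k p`), and any real `ρ > 0`,
`E[binom(G+ρ-1, ρ)] = (1/p)^ρ`. -/
theorem geometric_generalized_binomial_moment (p ρ : ℝ)
    (hp : p ∈ Set.Ioc (0 : ℝ) 1) (hρ : 0 < ρ) :
    ∑' k : ℕ, ((1 - p) ^ k * p) * gammaBinom (((k : ℝ) + 1) + ρ - 1) ρ
      = (1 / p) ^ ρ := by
  obtain ⟨hp0, hp1⟩ := hp
  set c : ℝ := 1 - p with hc_def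
  have hc0 : 0 ≤ c := by simp [hc_def]; linarith
  have hΓρ : 0 < Real.Gamma (ρ + 1) := Real.Gamma_pos_of_pos (by linarith)
  -- the auxiliary real sequence
  set u : ℕ → ℝ := fun k => c ^ k / k.factorial * Real.Gamma ((k : ℝ) + ρ + 1) with hu_def
  have hu_nonneg : ∀ k, 0 ≤ u k := fun k => by
    have := Real.Gamma_pos_of_pos (show (0:ℝ) < (k : ℝ) + ρ + 1 by positivity)
    positivity
  set S : ℝ := (1 / p) ^ (ρ + 1) * Real.Gamma (ρ + 1) with hS_def
  have hS_nonneg : 0 ≤ S := by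
    have : (0:ℝ) ≤ (1/p) ^ (ρ+1) := Real.rpow_nonneg (by positivity) _
    positivity
  -- Key ENNReal computation
  have key : ∑' k : ℕ, ENNReal.ofReal (u k) = ENNReal.ofReal S := by
    have h1 : ∀ k : ℕ, ENNReal.ofReal (u k)
        = ENNReal.ofReal (c ^ k / k.factorial) *
          ∫⁻ t in Ioi (0:ℝ), ENNReal.ofReal (Real.exp (-t) * t ^ ((k : ℝ) + ρ)) := by
      intro k
      have : ((k : ℝ) + ρ) = ((k : ℝ) + ρ + 1) - 1 := by ring
      rw [this, gamma_lintegral _ (by positivity), ← ENNReal.ofReal_mul (by positivity)]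
    calc ∑' k : ℕ, ENNReal.ofReal (u k)
        = ∑' k : ℕ, ∫⁻ t in Ioi (0:ℝ),
            ENNReal.ofReal (c ^ k / k.factorial) *
              ENNReal.ofReal (Real.exp (-t) * t ^ ((k : ℝ) + ρ)) := by
          refine tsum_congr fun k => ?_
          rw [h1 k, lintegral_const_mul'' _ (by fun_prop)]
      _ = ∫⁻ t in Ioi (0:ℝ), ∑' k : ℕ,
            ENNReal.ofReal (c ^ k / k.factorial) *
              ENNReal.ofReal (Real.exp (-t) * t ^ ((k : ℝ) + ρ)) := by
          exact (lintegral_tsum fun k => by fun_prop).symm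
      _ = ∫⁻ t in Ioi (0:ℝ), ENNReal.ofReal (t ^ ρ * Real.exp (-(p * t))) := by
          refine setLIntegral_congr_fun measurableSet_Ioi (fun t ht => ?_)
          have ht0 : 0 < t := ht
          have hterm : ∀ k : ℕ,
              ENNReal.ofReal (c ^ k / k.factorial) *
                ENNReal.ofReal (Real.exp (-t) * t ^ ((k : ℝ) + ρ))
              = ENNReal.ofReal ((Real.exp (-t) * t ^ ρ) * ((c * t) ^ k / k.factorial)) := by
            intro k
            rw [← ENNReal.ofReal_mul (by positivity)]
            congr 1
            rw [Real.rpow_add ht0, Real.rpow_natCast, mul_pow]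
            ring
          simp_rw [hterm]
          have hsummable : Summable (fun k : ℕ => (c * t) ^ k / (k.factorial : ℝ)) := by
            simpa [div_eq_mul_inv, mul_comm] using Real.summable_pow_div_factorial (c * t)
          rw [← ENNReal.ofReal_tsum_of_nonneg (fun k => by positivity)
            (hsummable.mul_left _), tsum_mul_left, exp_tsum]
          congr 1
          rw [mul_comm (Real.exp (-t)), mul_assoc, ← Real.exp_add]
          congr 1
          rw [hc_def]; ring
      _ = ENNReal.ofReal S := by
          have hint : IntegrableOn (fun t : ℝ => t ^ ρ * Real.exp (-(p * t))) (Ioi 0) := by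
            have := integrableOn_rpow_mul_exp_neg_mul_rpow (p := 1) (s := ρ) (b := p)
              (by linarith) zero_lt_one hp0
            refine this.congr_fun (fun t ht => ?_) measurableSet_Ioi
            simp only [Real.rpow_one, neg_mul]
          rw [← ofReal_integral_eq_lintegral_ofReal hint ?_]
          · congr 1
            have : ∀ t ∈ Ioi (0:ℝ), t ^ ρ * Real.exp (-(p * t))
                = t ^ ((ρ + 1) - 1) * Real.exp (-(p * t)) := by
              intro t ht; norm_num
            rw [setIntegral_congr_fun measurableSet_Ioi this,
              Real.integral_rpow_mul_exp_neg_mul_Ioi (by linarith) hp0]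
          · filter_upwards [ae_restrict_mem measurableSet_Ioi] with t ht
            have : (0:ℝ) < t := ht
            positivity
  -- back to the reals
  have hsum_u : Summable u := by
    have h := ENNReal.summable_toReal (by rw [key]; exact ENNReal.ofReal_ne_top)
    refine h.congr fun k => ?_
    exact ENNReal.toReal_ofReal (hu_nonneg k)
  have htsum_u : ∑' k, u k = S := by
    have h2 := congrArg ENNReal.toReal key
    rw [ENNReal.tsum_toReal_eq (fun k => ENNReal.ofReal_ne_top),
      ENNReal.toReal_ofReal hS_nonneg] at h2
    calc ∑' k, u k = ∑' k, (ENNReal.ofReal (u k)).toReal :=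
          tsum_congr fun k => (ENNReal.toReal_ofReal (hu_nonneg k)).symm
      _ = S := h2
  have hterm : ∀ k : ℕ, ((1 - p) ^ k * p) * gammaBinom (((k : ℝ) + 1) + ρ - 1) ρ
      = (p / Real.Gamma (ρ + 1)) * u k := by
    intro k
    unfold gammaBinom
    have e1 : ((k:ℝ)+1)+ρ-1+1 = (k:ℝ)+ρ+1 := by ring
    have e2 : ((k:ℝ)+1)+ρ-1-ρ+1 = (k:ℝ)+1 := by ring
    rw [e1, e2, Real.Gamma_nat_eq_factorial, hu_def]
    have hfac : (k.factorial : ℝ) ≠ 0 := Nat.cast_ne_zero.mpr k.factorial_ne_zero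
    field_simp
    ring_nf
    rw [hc_def]
  calc ∑' k : ℕ, ((1 - p) ^ k * p) * gammaBinom (((k : ℝ) + 1) + ρ - 1) ρ
      = ∑' k : ℕ, (p / Real.Gamma (ρ + 1)) * u k := tsum_congr hterm
    _ = (p / Real.Gamma (ρ + 1)) * S := by rw [tsum_mul_left, htsum_u]
    _ = (1 / p) ^ ρ := by
        rw [hS_def, Real.rpow_add (by positivity) ρ 1, Real.rpow_one]
        field_simp
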